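/- Let ψ(z) = Σ_{n≥0} b_n z^n have nonnegative coefficients with b_0 > 0, apex τ ∈ (0,R_ψ) (i.e. τψ'(τ)=ψ(τ)), and set ρ = τ/ψ(τ). Define the sequence of functions g_n on the closed disk {|z| ≤ ρ} by g_0(z) = b_0 z and g_n(z) = zψ(g_{n−1}(z)). Then for every n ≥ 0 and every |z| ≤ ρ, one has |g_n(z)| < τ. -/

import Mathlib

open Complex

/-- Let ψ(z) = Σ b_n z^n have nonnegative coefficients, b_0 > 0, apex τ
(τψ'(τ) = ψ(τ)) in (0, R_ψ), and ρ = τ/ψ(τ). The iterates g_0(z) = b_0 z,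
g_n(z) = zψ(g_{n−1}(z)) satisfy |g_n(z)| < τ for all |z| ≤ ρ. -/
theorem stmt_4 (b : ℕ → ℝ) (hb : ∀ n, 0 ≤ b n) (hb0 : 0 < b 0)
    (R : ℝ) (hR : 0 < R)
    (hsum : ∀ r : ℝ, 0 ≤ r → r < R → Summable (fun n => b n * r ^ n))
    (ψ : ℂ → ℂ) (hψ : ∀ z : ℂ, ψ z = ∑' n, (b n : ℂ) * z ^ n)
    (ψR ψR' : ℝ → ℝ)
    (hψR : ∀ t : ℝ, ψR t = ∑' n, b n * t ^ n)
    (hψR' : ∀ t : ℝ, ψR' t = ∑' n : ℕ, (n : ℝ) * b n * t ^ (n - 1))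
    (τ : ℝ) (hτ : τ ∈ Set.Ioo 0 R) (hapex : τ * ψR' τ = ψR τ)
    (ρ : ℝ) (hρ : ρ = τ / ψR τ)
    (g : ℕ → ℂ → ℂ)
    (hg0 : ∀ z, g 0 z = (b 0 : ℂ) * z)
    (hgrec : ∀ n z, g (n + 1) z = z * ψ (g n z)) :
    ∀ n : ℕ, ∀ z : ℂ, ‖z‖ ≤ ρ → ‖g n z‖ < τ := by
  obtain ⟨hτ0, hτR⟩ := hτ
  have hsτ : Summable (fun n => b n * τ ^ n) := hsum τ hτ0.le hτR
  -- there is some k ≥ 1 with b k > 0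
  obtain ⟨k, hk1, hbk⟩ : ∃ k, 1 ≤ k ∧ 0 < b k := by
    by_contra h
    push_neg at h
    have hz : ∀ n, 1 ≤ n → b n = 0 := fun n hn => le_antisymm (h n hn) (hb n)
    have h1 : ψR' τ = 0 := by
      rw [hψR']
      have : ∀ n : ℕ, (n : ℝ) * b n * τ ^ (n - 1) = 0 := by
        intro n
        rcases Nat.eq_zero_or_pos n with h0 | h0
        · simp [h0]
        · simp [hz n h0]
      simp [this]
    have h2 : ψR τ = b 0 := by
      rw [hψR]
      rw [tsum_eq_single 0]
      · simp
      · intro n hn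
        simp [hz n (Nat.one_le_iff_ne_zero.mpr hn)]
    rw [h1, h2] at hapex
    simp at hapex
    exact hb0.ne' hapex.symm
  -- ψR τ > b 0
  have hψτgt : b 0 < ψR τ := by
    rw [hψR]
    have hle : b 0 + b k * τ ^ k ≤ ∑' n, b n * τ ^ n := by
      have := Summable.sum_le_tsum ({0, k} : Finset ℕ)
        (fun n _ => mul_nonneg (hb n) (pow_nonneg hτ0.le n)) hsτ
      rwa [Finset.sum_pair (by omega : (0:ℕ) ≠ k), pow_zero, mul_one] at this
    have : 0 < b k * τ ^ k := mul_pos hbk (pow_pos hτ0 k)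
    linarith
  have hψτpos : 0 < ψR τ := lt_trans hb0 hψτgt
  have hρpos : 0 < ρ := by rw [hρ]; positivity
  have hρψ : ρ * ψR τ = τ := by
    rw [hρ]; field_simp
  -- monotone: for 0 ≤ s < τ, ψR s < ψR τ
  have hmono : ∀ s : ℝ, 0 ≤ s → s < τ → ψR s < ψR τ := by
    intro s hs0 hsτ'
    rw [hψR, hψR]
    refine Summable.tsum_lt_tsum (i := k) (fun n => ?_) ?_
      (hsum s hs0 (hsτ'.trans hτR)) hsτ
    · exact mul_le_mul_of_nonneg_left (pow_le_pow_left₀ hs0 hsτ'.le n) (hb n)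
    · exact mul_lt_mul_of_pos_left
        (pow_lt_pow_left₀ hsτ' hs0 (by omega)) hbk
  -- |ψ w| ≤ ψR |w| for |w| < R
  have habs : ∀ w : ℂ, ‖w‖ < R → ‖ψ w‖ ≤ ψR (‖w‖) := by
    intro w hw
    have hsw : Summable (fun n => b n * ‖w‖ ^ n) :=
      hsum _ (norm_nonneg w) hw
    have hnorm : ∀ n, ‖(b n : ℂ) * w ^ n‖ = b n * ‖w‖ ^ n := by
      intro n
      rw [norm_mul, norm_pow, Complex.norm_real, Real.norm_eq_abs,
        _root_.abs_of_nonneg (hb n)]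
    rw [hψ, hψR]
    calc ‖∑' n, (b n : ℂ) * w ^ n‖ = ‖∑' n, (b n : ℂ) * w ^ n‖ := rfl
      _ ≤ ∑' n, ‖(b n : ℂ) * w ^ n‖ :=
          norm_tsum_le_tsum_norm (by simpa only [hnorm] using hsw)
      _ = ∑' n, b n * ‖w‖ ^ n := by simp only [hnorm]
  intro n
  induction n with
  | zero =>
    intro z hz
    rw [hg0, norm_mul, Complex.norm_real, Real.norm_eq_abs, _root_.abs_of_nonneg hb0.le]
    calc b 0 * ‖z‖ ≤ b 0 * ρ := by
          exact mul_le_mul_of_nonneg_left hz hb0.le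
      _ < ψR τ * ρ := by
          exact mul_lt_mul_of_pos_right hψτgt hρpos
      _ = τ := by rw [mul_comm]; exact hρψ
  | succ n ih =>
    intro z hz
    rw [hgrec, norm_mul]
    have hgn := ih z hz
    have hgn0 : 0 ≤ ‖g n z‖ := norm_nonneg _
    have h1 : ‖ψ (g n z)‖ ≤ ψR (‖g n z‖) :=
      habs _ (hgn.trans hτR)
    have h2 : ψR (‖g n z‖) < ψR τ := hmono _ hgn0 hgn
    have hψpos : 0 ≤ ‖ψ (g n z)‖ := norm_nonneg _
    calc ‖z‖ * ‖ψ (g n z)‖ ≤ ρ * ‖ψ (g n z)‖ :=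
          mul_le_mul_of_nonneg_right hz hψpos
      _ ≤ ρ * ψR (‖g n z‖) := mul_le_mul_of_nonneg_left h1 hρpos.le
      _ < ρ * ψR τ := mul_lt_mul_of_pos_left h2 hρpos
      _ = τ := hρψ
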